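/- arXiv:1810.10427 — 2 statements merged into one kernel-verified Lean document; each statement's English description precedes it below -/
import Mathlib

section
/- Variance bound for bilinear forms: let (x_i, y_i), i = 1,…,n, be i.i.d. mean-zero pairs with E x₁² = γˣ, E y₁² = γʸ, E x₁y₁ = ρ, κ = E(x₁y₁ − ρ)², and B a symmetric n×n real matrix. Then E[(XᵀBY − ρ tr B)²] ≤ 3 max(κ, γˣγʸ) tr(B²), where X = (x_i), Y = (y_i). -/
open scoped ENNReal
open MeasureTheory ProbabilityTheory Matrix

section Aux

variable {α : Type*} [MeasurableSpace α] {μ : Measure α}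

lemma memL2_mul {f g : α → ℝ} (hf : MemLp f 4 μ) (hg : MemLp g 4 μ) :
    MemLp (fun ω => f ω * g ω) 2 μ :=
  hg.smul (φ := f) hf (hpqr := ⟨by
    rw [← two_mul, show (4:ℝ≥0∞) = 2*2 by norm_num,
      ENNReal.mul_inv (by norm_num) (by norm_num), ← mul_assoc,
      ENNReal.mul_inv_cancel (by norm_num) (by norm_num), one_mul]⟩)

lemma integrable_mul_L2 {f g : α → ℝ} (hf : MemLp f 2 μ) (hg : MemLp g 2 μ) :
    Integrable (fun ω => f ω * g ω) μ := by
  have h : MemLp (fun ω => f ω * g ω) 1 μ :=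
    hg.smul (φ := f) hf (hpqr := ⟨by
      rw [inv_one, ← two_mul, ENNReal.mul_inv_cancel (by norm_num) (by norm_num)]⟩)
  exact memLp_one_iff_integrable.mp h

lemma integrable_mul4 {f g h k : α → ℝ} (hf : MemLp f 4 μ) (hg : MemLp g 4 μ)
    (hh : MemLp h 4 μ) (hk : MemLp k 4 μ) :
    Integrable (fun ω => f ω * g ω * h ω * k ω) μ := by
  have := integrable_mul_L2 (memL2_mul hf hg) (memL2_mul hh hk)
  exact this.congr (Filter.EventuallyEq.of_eq (funext fun ω => by ring))

lemma iIndep_integral_prod {Ω : Type*} [MeasureSpace Ω] [IsProbabilityMeasure (ℙ : Measure Ω)]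
    {n : ℕ} {q : Fin n → Ω → ℝ} (hq : iIndepFun q ℙ)
    (hm : ∀ i, Measurable (q i)) (hi : ∀ i, Integrable (q i) ℙ) (s : Finset (Fin n)) :
    Integrable (fun ω => ∏ i ∈ s, q i ω) ℙ ∧
      (∫ ω, ∏ i ∈ s, q i ω) = ∏ i ∈ s, ∫ ω, q i ω := by
  classical
  induction s using Finset.induction_on with
  | empty => simp
  | @insert a s ha ih =>
    have hprod : IndepFun (q a) (fun ω => ∏ i ∈ s, q i ω) ℙ := by
      have h := (hq.indepFun_finsetProd_of_notMem hm ha).symm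
      have : (∏ j ∈ s, q j) = fun ω => ∏ i ∈ s, q i ω := by
        funext ω; simp
      rwa [this] at h
    have hins : (fun ω => ∏ i ∈ insert a s, q i ω)
        = fun ω => q a ω * ∏ i ∈ s, q i ω := by
      funext ω; exact Finset.prod_insert ha
    constructor
    · rw [hins]; exact hprod.integrable_mul (hi a) ih.1
    · rw [hins, Finset.prod_insert ha, ← ih.2]
      exact hprod.integral_mul_eq_mul_integral (hi a).aestronglyMeasurable ih.1.aestronglyMeasurable

lemma sum_collapse1 {n : ℕ} (B : Matrix (Fin n) (Fin n) ℝ) (c : ℝ) :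
    ∑ i, ∑ j, ∑ k, ∑ l, B i j * B k l * (if j = i then (if l = k then c else 0) else 0)
      = c * ((∑ i, B i i) * (∑ k, B k k)) := by
  simp [mul_ite, mul_zero, Finset.sum_ite_eq', Finset.mul_sum, Finset.sum_mul]
  exact Finset.sum_congr rfl fun _ _ => Finset.sum_congr rfl fun _ _ => by ring

lemma sum_collapse2 {n : ℕ} (B : Matrix (Fin n) (Fin n) ℝ) (c : ℝ) :
    ∑ i, ∑ j, ∑ k, ∑ l, B i j * B k l * (if k = i then (if l = j then c else 0) else 0)
      = c * ∑ i, ∑ j, B i j * B i j := by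
  simp [mul_ite, mul_zero, Finset.sum_ite_eq', Finset.mul_sum, Finset.sum_mul]
  exact Finset.sum_congr rfl fun _ _ => Finset.sum_congr rfl fun _ _ => by ring

lemma sum_collapse3 {n : ℕ} (B : Matrix (Fin n) (Fin n) ℝ) (c : ℝ) :
    ∑ i, ∑ j, ∑ k, ∑ l, B i j * B k l * (if l = i then (if k = j then c else 0) else 0)
      = c * ∑ i, ∑ j, B i j * B j i := by
  simp [mul_ite, mul_zero, Finset.sum_ite_eq', Finset.mul_sum, Finset.sum_mul]
  exact Finset.sum_congr rfl fun _ _ => Finset.sum_congr rfl fun _ _ => by ring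

lemma sum_collapse4 {n : ℕ} (B : Matrix (Fin n) (Fin n) ℝ) (c : ℝ) :
    ∑ i, ∑ j, ∑ k, ∑ l, B i j * B k l *
        (if j = i then (if k = i then (if l = i then c else 0) else 0) else 0)
      = c * ∑ i, B i i * B i i := by
  simp [mul_ite, mul_zero, Finset.sum_ite_eq', Finset.mul_sum, Finset.sum_mul]
  exact Finset.sum_congr rfl fun _ _ => by ring

end Aux

theorem bilinear_form_variance_bound {Ω : Type*} [MeasureSpace Ω]
    [IsProbabilityMeasure (ℙ : Measure Ω)] {n : ℕ} (hn : 0 < n)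
    (x y : Fin n → Ω → ℝ)
    (hmeas : ∀ i, Measurable (x i)) (hmeas' : ∀ i, Measurable (y i))
    -- the pairs (x_i, y_i) are independent ...
    (hindep : iIndepFun (fun i ω => (x i ω, y i ω)) ℙ)
    -- ... and identically distributed
    (hident : ∀ i, IdentDistrib (fun ω => (x i ω, y i ω))
        (fun ω => (x ⟨0, hn⟩ ω, y ⟨0, hn⟩ ω)) ℙ ℙ)
    -- mean zero
    (hmx : ∀ i, ∫ ω, x i ω = 0) (hmy : ∀ i, ∫ ω, y i ω = 0)
    -- finite fourth moments
    (h4x : ∀ i, MemLp (x i) 4 ℙ) (h4y : ∀ i, MemLp (y i) 4 ℙ)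
    (γx γy ρ κ : ℝ)
    (hγx : γx = ∫ ω, (x ⟨0, hn⟩ ω) ^ 2) (hγy : γy = ∫ ω, (y ⟨0, hn⟩ ω) ^ 2)
    (hρ : ρ = ∫ ω, x ⟨0, hn⟩ ω * y ⟨0, hn⟩ ω)
    (hκ : κ = ∫ ω, (x ⟨0, hn⟩ ω * y ⟨0, hn⟩ ω - ρ) ^ 2)
    (B : Matrix (Fin n) (Fin n) ℝ) (hB : B.IsSymm) :
    ∫ ω, ((∑ i, ∑ j, x i ω * B i j * y j ω) - ρ * B.trace) ^ 2
      ≤ 3 * max κ (γx * γy) * (B * B).trace := by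
  classical
  set i0 : Fin n := ⟨0, hn⟩ with hi0def
  -- basic integrability facts
  have hL2x : ∀ i, MemLp (x i) 2 ℙ := fun i => (h4x i).mono_exponent (by norm_num)
  have hL2y : ∀ i, MemLp (y i) 2 ℙ := fun i => (h4y i).mono_exponent (by norm_num)
  have hintx : ∀ i, Integrable (x i) ℙ := fun i => (h4x i).integrable (by norm_num)
  have hinty : ∀ i, Integrable (y i) ℙ := fun i => (h4y i).integrable (by norm_num)
  have hintxy : ∀ i j, Integrable (fun ω => x i ω * y j ω) ℙ := fun i j =>
    integrable_mul_L2 (hL2x i) (hL2y j)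
  have hintxx : ∀ i, Integrable (fun ω => x i ω * x i ω) ℙ := fun i =>
    integrable_mul_L2 (hL2x i) (hL2x i)
  have hintyy : ∀ i, Integrable (fun ω => y i ω * y i ω) ℙ := fun i =>
    integrable_mul_L2 (hL2y i) (hL2y i)
  have hint4 : ∀ i j k l, Integrable (fun ω => x i ω * y j ω * x k ω * y l ω) ℙ :=
    fun i j k l => integrable_mul4 (h4x i) (h4y j) (h4x k) (h4y l)
  -- identical distribution: moments
  have hmom : ∀ (u : ℝ × ℝ → ℝ), Measurable u → ∀ i,
      (∫ ω, u (x i ω, y i ω)) = ∫ ω, u (x i0 ω, y i0 ω) :=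
    fun u hu i => ((hident i).comp hu).integral_eq
  have mxy : ∀ i, (∫ ω, x i ω * y i ω) = ρ := by
    intro i
    have h := hmom (fun z => z.1 * z.2) (measurable_fst.mul measurable_snd) i
    simp only at h
    rw [h, hρ]
  have mxx : ∀ i, (∫ ω, x i ω * x i ω) = γx := by
    intro i
    have h := hmom (fun z => z.1 * z.1) (measurable_fst.mul measurable_fst) i
    simp only at h
    rw [h, hγx]
    congr 1; funext ω; ring
  have myy : ∀ i, (∫ ω, y i ω * y i ω) = γy := by
    intro i
    have h := hmom (fun z => z.2 * z.2) (measurable_snd.mul measurable_snd) i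
    simp only at h
    rw [h, hγy]
    congr 1; funext ω; ring
  have mx2y2 : ∀ i, (∫ ω, x i ω * y i ω * (x i ω * y i ω)) = κ + ρ ^ 2 := by
    intro i
    have h := hmom (fun z => z.1 * z.2 * (z.1 * z.2))
      ((measurable_fst.mul measurable_snd).mul (measurable_fst.mul measurable_snd)) i
    simp only at h
    rw [h]
    have hsq : Integrable (fun ω => x i0 ω * y i0 ω * (x i0 ω * y i0 ω)) ℙ :=
      integrable_mul_L2 (memL2_mul (h4x i0) (h4y i0)) (memL2_mul (h4x i0) (h4y i0))
    have hexp : κ = (∫ ω, x i0 ω * y i0 ω * (x i0 ω * y i0 ω)) - 2 * ρ * ρ + ρ ^ 2 := by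
      rw [hκ]
      have e : (fun ω => (x i0 ω * y i0 ω - ρ) ^ 2)
          = fun ω => (x i0 ω * y i0 ω * (x i0 ω * y i0 ω)
              - (2 * ρ) * (x i0 ω * y i0 ω)) + ρ ^ 2 := by
        funext ω; ring
      have hsub : Integrable (fun ω => x i0 ω * y i0 ω * (x i0 ω * y i0 ω)
          - 2 * ρ * (x i0 ω * y i0 ω)) ℙ := hsq.sub ((hintxy i0 i0).const_mul (2 * ρ))
      rw [e, integral_add hsub (integrable_const _),
        integral_sub hsq ((hintxy i0 i0).const_mul (2 * ρ)), integral_const_mul _,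
        integral_const, mxy i0]
      simp [measure_univ]
    rw [hexp]; ring
  have m4 : ∀ i, (∫ ω, x i ω * x i ω * y i ω * y i ω) = κ + ρ ^ 2 := by
    intro i
    have e : (fun ω => x i ω * x i ω * y i ω * y i ω)
        = fun ω => x i ω * y i ω * (x i ω * y i ω) := funext fun ω => by ring
    rw [e]; exact mx2y2 i
  -- off-diagonal second moments vanish
  have mxy0 : ∀ i j, i ≠ j → (∫ ω, x i ω * y j ω) = 0 := by
    intro i j hij
    have h2 : IndepFun (x i) (y j) ℙ :=
      (hindep.indepFun hij).comp measurable_fst measurable_snd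
    have h3 : (fun ω => x i ω * y j ω) = x i * y j := rfl
    rw [h3, h2.integral_mul_eq_mul_integral (hintx i).aestronglyMeasurable (hinty j).aestronglyMeasurable, hmx i, hmy j, mul_zero]
  -- key product formula from independence
  have key : ∀ (f : Fin n → ℝ × ℝ → ℝ), (∀ a, Measurable (f a)) →
      (∀ a, Integrable (fun ω => f a (x a ω, y a ω)) ℙ) →
      (∫ ω, ∏ a, f a (x a ω, y a ω)) = ∏ a, ∫ ω, f a (x a ω, y a ω) := by
    intro f hfm hfi
    have hq : iIndepFun (fun a ω => f a (x a ω, y a ω)) ℙ :=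
      hindep.comp f hfm
    exact (iIndep_integral_prod hq
      (fun a => (hfm a).comp ((hmeas a).prodMk (hmeas' a))) hfi Finset.univ).2
  -- the monomial expansion
  have mono : ∀ i j k l : Fin n, (∫ ω, x i ω * y j ω * x k ω * y l ω)
      = ∏ a, ∫ ω, ((if i = a then x a ω else 1) * (if k = a then x a ω else 1)
          * (if j = a then y a ω else 1) * (if l = a then y a ω else 1)) := by
    intro i j k l
    have hm1 : ∀ (c : Prop) [Decidable c], Measurable (fun z : ℝ × ℝ => if c then z.1 else 1) := by
      intro c hc; by_cases h : c <;> simp [h] <;> fun_prop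
    have hm2 : ∀ (c : Prop) [Decidable c], Measurable (fun z : ℝ × ℝ => if c then z.2 else 1) := by
      intro c hc; by_cases h : c <;> simp [h] <;> fun_prop
    have hL4x : ∀ (a : Fin n) (c : Prop) [Decidable c],
        MemLp (fun ω => if c then x a ω else (1:ℝ)) 4 ℙ := by
      intro a c hc; by_cases h : c
      · simpa [h] using h4x a
      · simpa [h] using memLp_const (1:ℝ)
    have hL4y : ∀ (a : Fin n) (c : Prop) [Decidable c],
        MemLp (fun ω => if c then y a ω else (1:ℝ)) 4 ℙ := by
      intro a c hc; by_cases h : c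
      · simpa [h] using h4y a
      · simpa [h] using memLp_const (1:ℝ)
    have h := key (fun a z => (if i = a then z.1 else 1) * (if k = a then z.1 else 1)
        * (if j = a then z.2 else 1) * (if l = a then z.2 else 1))
      (fun a => (((hm1 _).mul (hm1 _)).mul (hm2 _)).mul (hm2 _))
      (fun a => integrable_mul4 (hL4x a _) (hL4x a _) (hL4y a _) (hL4y a _))
    simp only at h
    rw [← h]
    congr 1; funext ω
    rw [Finset.prod_mul_distrib, Finset.prod_mul_distrib, Finset.prod_mul_distrib]
    simp only [Finset.prod_ite_eq, Finset.mem_univ, if_true]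
    ring
  -- value of each fourth moment
  have Mval : ∀ i j k l : Fin n, (∫ ω, x i ω * y j ω * x k ω * y l ω)
      = (if j = i then (if l = k then ρ ^ 2 else 0) else 0)
        + (if k = i then (if l = j then γx * γy else 0) else 0)
        + (if l = i then (if k = j then ρ ^ 2 else 0) else 0)
        + (if j = i then (if k = i then (if l = i then (κ - ρ ^ 2 - γx * γy) else 0) else 0)
            else 0) := by
    intro i j k l
    rw [mono i j k l]
    by_cases hij : i = j
    · subst hij
      by_cases hkl : k = l
      · subst hkl
        by_cases hik : i = k
        · subst hik
          refine (Finset.prod_eq_single i ?_ ?_).trans ?_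
          · intro b _ hb
            have h1 : ¬ i = b := fun h => hb h.symm
            simp [h1]
          · intro h; exact absurd (Finset.mem_univ i) h
          · simp [m4]
            ring
        · have nki : ¬ k = i := fun h => hik h.symm
          refine Eq.trans (Finset.prod_subset (Finset.subset_univ ({i, k} : Finset (Fin n)))
            ?_).symm ?_
          · intro b _ hb
            simp only [Finset.mem_insert, Finset.mem_singleton, not_or] at hb
            have h1 : ¬ i = b := fun h => hb.1 h.symm
            have h2 : ¬ k = b := fun h => hb.2 h.symm
            simp [h1, h2]
          · rw [Finset.prod_pair hik]
            simp [hik, nki, mxy]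
            ring
      · by_cases hik : i = k
        · subst hik
          have nli : ¬ l = i := fun h => hkl h.symm
          refine (Finset.prod_eq_zero (Finset.mem_univ l) ?_).trans ?_
          · simp [hkl, hmy]
          · simp [hkl, nli]
        · have nki : ¬ k = i := fun h => hik h.symm
          have nlk : ¬ l = k := fun h => hkl h.symm
          refine (Finset.prod_eq_zero (Finset.mem_univ k) ?_).trans ?_
          · simp [hik, nlk, hmx]
          · simp [nki, nlk]
    · have nji : ¬ j = i := fun h => hij h.symm
      by_cases hkl : k = l
      · subst hkl
        by_cases hik : i = k
        · subst hik
          refine (Finset.prod_eq_zero (Finset.mem_univ j) ?_).trans ?_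
          · simp [hij, hmy]
          · simp [hij, nji]
        · have nki : ¬ k = i := fun h => hik h.symm
          refine (Finset.prod_eq_zero (Finset.mem_univ i) ?_).trans ?_
          · simp [nki, nji, hmx]
          · simp [nji, nki]
      · by_cases hik : i = k
        · subst hik
          by_cases hjl : j = l
          · subst hjl
            refine Eq.trans (Finset.prod_subset (Finset.subset_univ ({i, j} : Finset (Fin n)))
              ?_).symm ?_
            · intro b _ hb
              simp only [Finset.mem_insert, Finset.mem_singleton, not_or] at hb
              have h1 : ¬ i = b := fun h => hb.1 h.symm
              have h2 : ¬ j = b := fun h => hb.2 h.symm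
              simp [h1, h2]
            · rw [Finset.prod_pair hij]
              simp [hij, nji, mxx, myy]
          · have nlj : ¬ l = j := fun h => hjl h.symm
            have nli : ¬ l = i := fun h => hkl h.symm
            refine (Finset.prod_eq_zero (Finset.mem_univ j) ?_).trans ?_
            · simp [hij, nlj, hmy]
            · simp [nji, nlj, nli]
        · have nki : ¬ k = i := fun h => hik h.symm
          by_cases hjl : j = l
          · subst hjl
            refine (Finset.prod_eq_zero (Finset.mem_univ i) ?_).trans ?_
            · simp [nki, nji, hmx]
            · simp [nji, nki]
          · have nlj : ¬ l = j := fun h => hjl h.symm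
            by_cases hil : i = l
            · subst hil
              by_cases hjk : j = k
              · subst hjk
                refine Eq.trans (Finset.prod_subset
                  (Finset.subset_univ ({i, j} : Finset (Fin n))) ?_).symm ?_
                · intro b _ hb
                  simp only [Finset.mem_insert, Finset.mem_singleton, not_or] at hb
                  have h1 : ¬ i = b := fun h => hb.1 h.symm
                  have h2 : ¬ j = b := fun h => hb.2 h.symm
                  simp [h1, h2]
                · rw [Finset.prod_pair hij]
                  simp [hij, nji, mxy]
                  ring
              · have nkj : ¬ k = j := fun h => hjk h.symm
                refine (Finset.prod_eq_zero (Finset.mem_univ k) ?_).trans ?_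
                · simp [hik, hjk, hmx]
                · simp [nji, nki, nkj]
            · have nli : ¬ l = i := fun h => hil h.symm
              refine (Finset.prod_eq_zero (Finset.mem_univ i) ?_).trans ?_
              · simp [nki, nji, nli, hmx]
              · simp [nji, nki, nli]
  -- trace rewrites
  have htr : B.trace = ∑ i, B i i := by simp [Matrix.trace, Matrix.diag]
  have hBB : (B * B).trace = ∑ i, ∑ j, B i j * B i j := by
    have h1 : (B * B).trace = ∑ i, ∑ j, B i j * B j i := by
      simp [Matrix.trace, Matrix.diag, Matrix.mul_apply]
    rw [h1]
    exact Finset.sum_congr rfl fun i _ => Finset.sum_congr rfl fun j _ => by rw [hB.apply i j]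
  have hsymmT : (∑ i, ∑ j, B i j * B j i) = ∑ i, ∑ j, B i j * B i j :=
    Finset.sum_congr rfl fun i _ => Finset.sum_congr rfl fun j _ => by rw [hB.apply i j]
  -- integrability of summands
  have hFint : ∀ p : Fin n × Fin n, Integrable (fun ω => x p.1 ω * B p.1 p.2 * y p.2 ω) ℙ := by
    intro p
    have h1 : (fun ω => x p.1 ω * B p.1 p.2 * y p.2 ω)
        = fun ω => B p.1 p.2 * (x p.1 ω * y p.2 ω) := funext fun ω => by ring
    rw [h1]; exact (hintxy p.1 p.2).const_mul _
  have hFF : ∀ p q : Fin n × Fin n, Integrable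
      (fun ω => (x p.1 ω * B p.1 p.2 * y p.2 ω) * (x q.1 ω * B q.1 q.2 * y q.2 ω)) ℙ := by
    intro p q
    have h1 : (fun ω => (x p.1 ω * B p.1 p.2 * y p.2 ω) * (x q.1 ω * B q.1 q.2 * y q.2 ω))
        = fun ω => (B p.1 p.2 * B q.1 q.2) * (x p.1 ω * y p.2 ω * x q.1 ω * y q.2 ω) :=
      funext fun ω => by ring
    rw [h1]; exact (hint4 _ _ _ _).const_mul _
  have hAint : Integrable (fun ω => ∑ p : Fin n × Fin n, x p.1 ω * B p.1 p.2 * y p.2 ω) ℙ :=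
    integrable_finset_sum _ (fun p _ => hFint p)
  have hAAint : Integrable (fun ω => ∑ p : Fin n × Fin n, ∑ q : Fin n × Fin n,
      (x p.1 ω * B p.1 p.2 * y p.2 ω) * (x q.1 ω * B q.1 q.2 * y q.2 ω)) ℙ :=
    integrable_finset_sum _ (fun p _ => integrable_finset_sum _ (fun q _ => hFF p q))
  -- first moment
  have hEA : (∫ ω, ∑ p : Fin n × Fin n, x p.1 ω * B p.1 p.2 * y p.2 ω) = ρ * ∑ i, B i i := by
    rw [integral_finset_sum _ (fun p _ => hFint p)]
    have h1 : ∀ p : Fin n × Fin n, (∫ ω, x p.1 ω * B p.1 p.2 * y p.2 ω)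
        = B p.1 p.2 * (if p.1 = p.2 then ρ else 0) := by
      intro p
      have h2 : (fun ω => x p.1 ω * B p.1 p.2 * y p.2 ω)
          = fun ω => B p.1 p.2 * (x p.1 ω * y p.2 ω) := funext fun ω => by ring
      rw [h2, integral_const_mul _]
      by_cases h : p.1 = p.2
      · rw [if_pos h, h, mxy]
      · rw [if_neg h, mxy0 p.1 p.2 h]
    rw [Finset.sum_congr rfl fun p _ => h1 p, Fintype.sum_prod_type]
    simp only [mul_ite, mul_zero, Finset.sum_ite_eq, Finset.mem_univ, if_true, Finset.mul_sum]
    exact Finset.sum_congr rfl fun i _ => by ring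
  -- second moment
  have hEAA : (∫ ω, ∑ p : Fin n × Fin n, ∑ q : Fin n × Fin n,
        (x p.1 ω * B p.1 p.2 * y p.2 ω) * (x q.1 ω * B q.1 q.2 * y q.2 ω))
      = ∑ p : Fin n × Fin n, ∑ q : Fin n × Fin n,
          (B p.1 p.2 * B q.1 q.2) * ∫ ω, x p.1 ω * y p.2 ω * x q.1 ω * y q.2 ω := by
    rw [integral_finset_sum _ (fun p _ => integrable_finset_sum _ (fun q _ => hFF p q))]
    refine Finset.sum_congr rfl fun p _ => ?_
    rw [integral_finset_sum _ (fun q _ => hFF p q)]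
    refine Finset.sum_congr rfl fun q _ => ?_
    have h1 : (fun ω => (x p.1 ω * B p.1 p.2 * y p.2 ω) * (x q.1 ω * B q.1 q.2 * y q.2 ω))
        = fun ω => (B p.1 p.2 * B q.1 q.2) * (x p.1 ω * y p.2 ω * x q.1 ω * y q.2 ω) :=
      funext fun ω => by ring
    rw [h1, integral_const_mul _]
  -- evaluate the quadruple sum
  have hquad : (∑ p : Fin n × Fin n, ∑ q : Fin n × Fin n,
        (B p.1 p.2 * B q.1 q.2) * ∫ ω, x p.1 ω * y p.2 ω * x q.1 ω * y q.2 ω)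
      = ρ ^ 2 * ((∑ i, B i i) * (∑ k, B k k)) + γx * γy * (∑ i, ∑ j, B i j * B i j)
        + ρ ^ 2 * (∑ i, ∑ j, B i j * B i j)
        + (κ - ρ ^ 2 - γx * γy) * (∑ i, B i i * B i i) := by
    have hstep : ∀ i j k l : Fin n, (B i j * B k l) * (∫ ω, x i ω * y j ω * x k ω * y l ω)
        = B i j * B k l * (if j = i then (if l = k then ρ ^ 2 else 0) else 0)
          + B i j * B k l * (if k = i then (if l = j then γx * γy else 0) else 0)
          + B i j * B k l * (if l = i then (if k = j then ρ ^ 2 else 0) else 0)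
          + B i j * B k l * (if j = i then (if k = i then (if l = i then (κ - ρ ^ 2 - γx * γy)
              else 0) else 0) else 0) := by
      intro i j k l; rw [Mval i j k l]; ring
    calc (∑ p : Fin n × Fin n, ∑ q : Fin n × Fin n, (B p.1 p.2 * B q.1 q.2)
          * ∫ ω, x p.1 ω * y p.2 ω * x q.1 ω * y q.2 ω)
        = ∑ i, ∑ j, ∑ k, ∑ l, (B i j * B k l) * ∫ ω, x i ω * y j ω * x k ω * y l ω := by
          simp only [Fintype.sum_prod_type]
      _ = (∑ i, ∑ j, ∑ k, ∑ l, B i j * B k l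
              * (if j = i then (if l = k then ρ ^ 2 else 0) else 0))
          + (∑ i, ∑ j, ∑ k, ∑ l, B i j * B k l
              * (if k = i then (if l = j then γx * γy else 0) else 0))
          + (∑ i, ∑ j, ∑ k, ∑ l, B i j * B k l
              * (if l = i then (if k = j then ρ ^ 2 else 0) else 0))
          + (∑ i, ∑ j, ∑ k, ∑ l, B i j * B k l
              * (if j = i then (if k = i then (if l = i then (κ - ρ ^ 2 - γx * γy) else 0)
                  else 0) else 0)) := by
          simp only [hstep, Finset.sum_add_distrib]
      _ = _ := by
          rw [sum_collapse1, sum_collapse2, sum_collapse3, sum_collapse4, hsymmT]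
  -- expand the square
  have key_eq : (∫ ω, ((∑ i, ∑ j, x i ω * B i j * y j ω) - ρ * B.trace) ^ 2)
      = (∫ ω, ∑ p : Fin n × Fin n, ∑ q : Fin n × Fin n,
          (x p.1 ω * B p.1 p.2 * y p.2 ω) * (x q.1 ω * B q.1 q.2 * y q.2 ω))
        - (ρ * ∑ i, B i i) ^ 2 := by
    rw [htr]
    have hptw : (fun ω => ((∑ i, ∑ j, x i ω * B i j * y j ω) - ρ * ∑ i, B i i) ^ 2)
        = fun ω => ((∑ p : Fin n × Fin n, ∑ q : Fin n × Fin n,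
              (x p.1 ω * B p.1 p.2 * y p.2 ω) * (x q.1 ω * B q.1 q.2 * y q.2 ω))
            - (2 * (ρ * ∑ i, B i i)) * (∑ p : Fin n × Fin n, x p.1 ω * B p.1 p.2 * y p.2 ω))
            + (ρ * ∑ i, B i i) ^ 2 := by
      funext ω
      have e1 : (∑ i, ∑ j, x i ω * B i j * y j ω)
          = ∑ p : Fin n × Fin n, x p.1 ω * B p.1 p.2 * y p.2 ω :=
        (Fintype.sum_prod_type (fun p : Fin n × Fin n => x p.1 ω * B p.1 p.2 * y p.2 ω)).symm
      have e2 : (∑ p : Fin n × Fin n, ∑ q : Fin n × Fin n,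
            (x p.1 ω * B p.1 p.2 * y p.2 ω) * (x q.1 ω * B q.1 q.2 * y q.2 ω))
          = (∑ p : Fin n × Fin n, x p.1 ω * B p.1 p.2 * y p.2 ω)
            * (∑ q : Fin n × Fin n, x q.1 ω * B q.1 q.2 * y q.2 ω) :=
        (Finset.sum_mul_sum _ _ _ _).symm
      rw [e1, e2]; ring
    have hsub : Integrable (fun ω => (∑ p : Fin n × Fin n, ∑ q : Fin n × Fin n,
          (x p.1 ω * B p.1 p.2 * y p.2 ω) * (x q.1 ω * B q.1 q.2 * y q.2 ω))
        - (2 * (ρ * ∑ i, B i i)) * (∑ p : Fin n × Fin n, x p.1 ω * B p.1 p.2 * y p.2 ω)) ℙ :=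
      hAAint.sub (hAint.const_mul _)
    rw [hptw, integral_add hsub (integrable_const _),
      integral_sub hAAint (hAint.const_mul _), integral_const_mul _, hEA, integral_const]
    simp [measure_univ]
    ring
  -- nonnegativity facts and Cauchy-Schwarz
  have hγx0 : 0 ≤ γx := hγx ▸ integral_nonneg fun ω => sq_nonneg _
  have hγy0 : 0 ≤ γy := hγy ▸ integral_nonneg fun ω => sq_nonneg _
  have hκ0 : 0 ≤ κ := hκ ▸ integral_nonneg fun ω => sq_nonneg _
  have hCS : ρ ^ 2 ≤ γx * γy := by
    by_cases hx0 : γx = 0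
    · have h1 : (∫ ω, (x i0 ω) ^ 2) = 0 := by rw [← hγx, hx0]
      have hintg : Integrable (fun ω => (x i0 ω) ^ 2) ℙ := (hL2x i0).integrable_sq
      have h2 : (fun ω => (x i0 ω) ^ 2) =ᵐ[ℙ] 0 :=
        (integral_eq_zero_iff_of_nonneg (fun ω => sq_nonneg _) hintg).mp h1
      have h3 : ρ = 0 := by
        rw [hρ]
        rw [integral_congr_ae (g := fun _ => (0:ℝ)) (h2.mono fun ω hω => by
          have hx : x i0 ω = 0 := by
            have h4 : (x i0 ω) ^ 2 = 0 := hω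
            exact pow_eq_zero_iff (by norm_num) |>.mp h4
          simp [hx])]
        simp
      rw [h3, hx0]; simp
    · have hγxpos : 0 < γx := lt_of_le_of_ne hγx0 (Ne.symm hx0)
      have hnn : 0 ≤ ∫ ω, (ρ * x i0 ω - γx * y i0 ω) ^ 2 :=
        integral_nonneg fun ω => sq_nonneg _
      have hexp : (∫ ω, (ρ * x i0 ω - γx * y i0 ω) ^ 2) = γx * (γx * γy - ρ ^ 2) := by
        have e : (fun ω => (ρ * x i0 ω - γx * y i0 ω) ^ 2)
            = fun ω => (ρ ^ 2 * (x i0 ω * x i0 ω) - (2 * ρ * γx) * (x i0 ω * y i0 ω))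
                + γx ^ 2 * (y i0 ω * y i0 ω) := funext fun ω => by ring
        have hsub2 : Integrable (fun ω => ρ ^ 2 * (x i0 ω * x i0 ω)
            - (2 * ρ * γx) * (x i0 ω * y i0 ω)) ℙ :=
          ((hintxx i0).const_mul _).sub ((hintxy i0 i0).const_mul _)
        rw [e, integral_add hsub2 ((hintyy i0).const_mul _),
          integral_sub ((hintxx i0).const_mul _) ((hintxy i0 i0).const_mul _),
          integral_const_mul _, integral_const_mul _, integral_const_mul _,
          mxx i0, myy i0, mxy i0]
        ring
      by_contra hc
      push_neg at hc
      have h5 : γx * γy - ρ ^ 2 < 0 := by linarith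
      have h6 : γx * (γx * γy - ρ ^ 2) < 0 := mul_neg_of_pos_of_neg hγxpos h5
      rw [hexp] at hnn
      linarith
  -- matrix facts
  have hd0 : 0 ≤ ∑ i, B i i * B i i := Finset.sum_nonneg fun i _ => mul_self_nonneg _
  have hdT : (∑ i, B i i * B i i) ≤ ∑ i, ∑ j, B i j * B i j :=
    Finset.sum_le_sum fun i _ =>
      Finset.single_le_sum (f := fun j => B i j * B i j) (fun j _ => mul_self_nonneg _)
        (Finset.mem_univ i)
  have hT0 : 0 ≤ ∑ i, ∑ j, B i j * B i j :=
    Finset.sum_nonneg fun i _ => Finset.sum_nonneg fun j _ => mul_self_nonneg _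
  have hM0 : 0 ≤ max κ (γx * γy) := le_trans (mul_nonneg hγx0 hγy0) (le_max_right _ _)
  have hkM := le_max_left κ (γx * γy)
  have hgM := le_max_right κ (γx * γy)
  rw [key_eq, hEAA, hquad, hBB]
  nlinarith [mul_nonneg (sub_nonneg.2 hkM) hd0,
    mul_nonneg (by linarith : (0:ℝ) ≤ 2 * max κ (γx * γy) - γx * γy - ρ ^ 2)
      (sub_nonneg.2 hdT),
    mul_nonneg hM0 hd0, mul_nonneg hM0 hT0]
end

section
/- Eigenvector perturbation lemma: let A, B be symmetric m×m matrices, λ_r(A) a simple eigenvalue of A with spectral gap δ_r(A) = min_{j≠r} |λ_j(A) − λ_r(A)|, and suppose ‖B‖ < δ_r(A)/3. Then λ_r(A+B) is simple, and choosing unit eigenvectors p_r(A), p_r(A+B) with p_r(A)ᵀp_r(A+B) ≥ 0, one has p_r(A+B) − p_r(A) = −H_r(A) B p_r(A) + R_r with ‖R_r‖ ≤ 10 δ_r(A)⁻² ‖B‖², where H_r(A) = Σ_{s≠r} (λ_s(A) − λ_r(A))⁻¹ P_s(A) is the reduced resolvent. -/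
open Matrix

/-- Euclidean norm of a vector in `Fin m → ℝ`. -/
noncomputable def evNorm {m : ℕ} (v : Fin m → ℝ) : ℝ := Real.sqrt (v ⬝ᵥ v)

section helpers
variable {m : ℕ}

lemma dotSelf_nonneg (v : Fin m → ℝ) : 0 ≤ v ⬝ᵥ v :=
  Finset.sum_nonneg fun i _ => mul_self_nonneg _

lemma evNorm_sq (v : Fin m → ℝ) : evNorm v ^ 2 = v ⬝ᵥ v :=
  Real.sq_sqrt (dotSelf_nonneg v)

lemma evNorm_nonneg (v : Fin m → ℝ) : 0 ≤ evNorm v := Real.sqrt_nonneg _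

lemma dual_orth (P : Fin m → (Fin m → ℝ))
    (horth : ∀ s t, P s ⬝ᵥ P t = if s = t then (1 : ℝ) else 0) (i j : Fin m) :
    ∑ s, P s i * P s j = if i = j then (1 : ℝ) else 0 := by
  classical
  set M : Matrix (Fin m) (Fin m) ℝ := Matrix.of (fun s i => P s i) with hM
  have h1 : M * Mᵀ = 1 := by
    ext s t
    simpa [M, Matrix.mul_apply, Matrix.one_apply, dotProduct] using horth s t
  have h2 : Mᵀ * M = 1 := mul_eq_one_comm.mp h1
  have := congrFun (congrFun h2 i) j
  simpa [M, Matrix.mul_apply, Matrix.one_apply] using this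

lemma parseval (P : Fin m → (Fin m → ℝ))
    (horth : ∀ s t, P s ⬝ᵥ P t = if s = t then (1 : ℝ) else 0) (v w : Fin m → ℝ) :
    ∑ s, (P s ⬝ᵥ v) * (P s ⬝ᵥ w) = v ⬝ᵥ w := by
  classical
  have key := dual_orth P horth
  calc ∑ s, (P s ⬝ᵥ v) * (P s ⬝ᵥ w)
      = ∑ s, ∑ i, ∑ j, (P s i * P s j) * (v i * w j) := by
        refine Finset.sum_congr rfl fun s _ => ?_
        rw [dotProduct, dotProduct, Finset.sum_mul_sum]
        exact Finset.sum_congr rfl fun i _ => Finset.sum_congr rfl fun j _ => by ring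
    _ = ∑ i, ∑ j, (∑ s, P s i * P s j) * (v i * w j) := by
        rw [Finset.sum_comm]
        refine Finset.sum_congr rfl fun i _ => ?_
        rw [Finset.sum_comm]
        refine Finset.sum_congr rfl fun j _ => ?_
        rw [Finset.sum_mul]
    _ = v ⬝ᵥ w := by
        rw [dotProduct]
        refine Finset.sum_congr rfl fun i _ => ?_
        rw [Finset.sum_eq_single i (fun j _ hj => by rw [key i j, if_neg (Ne.symm hj), zero_mul])
          (fun h => absurd (Finset.mem_univ i) h)]
        rw [key i i, if_pos rfl, one_mul]

lemma parseval_sq (P : Fin m → (Fin m → ℝ))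
    (horth : ∀ s t, P s ⬝ᵥ P t = if s = t then (1 : ℝ) else 0) (v : Fin m → ℝ) :
    ∑ s, (P s ⬝ᵥ v) ^ 2 = v ⬝ᵥ v := by
  simp only [pow_two]; exact parseval P horth v v

lemma dotProduct_finsum (v : Fin m → ℝ) (S : Finset (Fin m)) (w : Fin m → (Fin m → ℝ)) :
    v ⬝ᵥ (∑ s ∈ S, w s) = ∑ s ∈ S, v ⬝ᵥ w s := by
  simp only [dotProduct, Finset.sum_apply, Finset.mul_sum]
  exact Finset.sum_comm

lemma symm_dot {A : Matrix (Fin m) (Fin m) ℝ} (hA : A.IsSymm) (x y : Fin m → ℝ) :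
    (A *ᵥ x) ⬝ᵥ y = x ⬝ᵥ (A *ᵥ y) := by
  rw [Matrix.dotProduct_mulVec, ← Matrix.mulVec_transpose, hA.eq]

lemma bessel2 (p q u : Fin m → ℝ) (hq : q ⬝ᵥ q = 1) (hu : u ⬝ᵥ u = 1) (hqu : q ⬝ᵥ u = 0)
    (hp : p ⬝ᵥ p = 1) : (p ⬝ᵥ q) ^ 2 + (p ⬝ᵥ u) ^ 2 ≤ 1 := by
  have h := dotSelf_nonneg (p - (p ⬝ᵥ q) • q - (p ⬝ᵥ u) • u)
  have e1 : q ⬝ᵥ p = p ⬝ᵥ q := dotProduct_comm _ _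
  have e2 : u ⬝ᵥ p = p ⬝ᵥ u := dotProduct_comm _ _
  have e3 : u ⬝ᵥ q = q ⬝ᵥ u := dotProduct_comm _ _
  simp only [sub_dotProduct, dotProduct_sub, smul_dotProduct,
    dotProduct_smul, smul_eq_mul, e1, e2, e3, hq, hu, hqu, hp] at h
  nlinarith [h]

lemma sum_smul_vecMulVec_mulVec (S : Finset (Fin m)) (cf : Fin m → ℝ)
    (P : Fin m → (Fin m → ℝ)) (v : Fin m → ℝ) :
    (∑ s ∈ S, cf s • Matrix.vecMulVec (P s) (P s)) *ᵥ v
      = ∑ s ∈ S, (cf s * (P s ⬝ᵥ v)) • P s := by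
  classical
  ext i
  simp only [Matrix.mulVec, dotProduct, Finset.sum_apply, Matrix.sum_apply, Matrix.smul_apply,
    Matrix.vecMulVec_apply, smul_eq_mul, Pi.smul_apply, Finset.sum_mul]
  rw [Finset.sum_comm]
  refine Finset.sum_congr rfl fun s _ => ?_
  rw [Finset.mul_sum, Finset.sum_mul]
  refine Finset.sum_congr rfl fun j _ => by ring

lemma aux_main (c2 S d2 b2 : ℝ) (h : d2 * S ≤ b2) (h4 : 4 * b2 ≤ d2) (hd2 : 0 < d2)
    (hS0 : 0 ≤ S) (hsplit : c2 + S = 1) : 3 / 4 ≤ c2 := by nlinarith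

lemma aux_cr1 (c S : ℝ) (h : c ^ 2 + S = 1) (hS : 0 ≤ S) : c ≤ 1 := by
  nlinarith [sq_nonneg (c - 1)]

lemma aux_1cr (c S : ℝ) (h : c ^ 2 + S = 1) (hc : 0 ≤ c) (hS : 0 ≤ S) : 1 - c ≤ S := by
  have hc1 : c ≤ 1 := aux_cr1 c S h hS
  nlinarith [mul_nonneg hc (sub_nonneg.mpr hc1)]

lemma aux_sq (x S : ℝ) (h0 : 0 ≤ 1 - x) (h1 : 1 - x ≤ S) : (x - 1) ^ 2 ≤ S ^ 2 := by
  nlinarith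

lemma aux_term (d2 dd2 g iv b f b2 : ℝ) (hg2 : g ^ 2 * (dd2 * d2) ≤ b2)
    (hi2 : iv ^ 2 * dd2 ≤ 1) (hdd0 : 0 ≤ dd2) (hd0 : 0 ≤ d2) :
    (dd2 * d2) * (g * b + iv * f) ^ 2 ≤ 2 * b2 * b ^ 2 + 2 * d2 * f ^ 2 := by
  nlinarith [mul_le_mul_of_nonneg_right hg2 (sq_nonneg b),
    mul_le_mul_of_nonneg_right hi2 (mul_nonneg hd0 (sq_nonneg f)),
    mul_nonneg (mul_nonneg hdd0 hd0) (sq_nonneg (g * b - iv * f))]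

lemma aux_S1δ (S d2 dd2 b2 : ℝ) (h : dd2 * S ≤ b2) (h2 : 4 / 9 * d2 ≤ dd2) (hS : 0 ≤ S) :
    S * d2 ≤ 9 / 4 * b2 := by
  nlinarith [mul_le_mul_of_nonneg_right h2 hS]

lemma aux_S1sq (S d2 b2 : ℝ) (h : S * d2 ≤ 9 / 4 * b2) (h4 : S ≤ 1 / 4) (hS : 0 ≤ S)
    (hd : 0 ≤ d2) (hb : 0 ≤ b2) : d2 * S ^ 2 ≤ 9 / 16 * b2 := by
  nlinarith [mul_le_mul_of_nonneg_right h hS, mul_le_mul_of_nonneg_left h4 hb]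

lemma aux_Srho (Sρ S d2 dd2 b2 : ℝ) (hsum : (dd2 * d2) * Sρ ≤ 2 * b2 * b2 + 2 * d2 * (b2 * (S ^ 2 + S)))
    (hd2 : 4 / 9 * d2 ≤ dd2) (hSρ : 0 ≤ Sρ) (hs1 : d2 * S ^ 2 ≤ 9 / 16 * b2)
    (hs2 : S * d2 ≤ 9 / 4 * b2) (hb2 : 0 ≤ b2) (hd0 : 0 ≤ d2) :
    d2 * d2 * Sρ ≤ 18 * (b2 * b2) := by
  nlinarith [mul_le_mul_of_nonneg_right hd2 (mul_nonneg hd0 hSρ),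
    mul_le_mul_of_nonneg_left hs1 hb2, mul_le_mul_of_nonneg_left hs2 hb2]

lemma aux_cr1sq (x S d2 b2 : ℝ) (h1 : x ≤ S ^ 2) (h2 : S * d2 ≤ 9 / 4 * b2) (hS : 0 ≤ S)
    (hd : 0 ≤ d2) : x * (d2 * d2) ≤ 81 / 16 * (b2 * b2) := by
  nlinarith [mul_le_mul_of_nonneg_right h1 (mul_nonneg hd hd),
    pow_le_pow_left₀ (mul_nonneg hS hd) h2 2]

end helpers

set_option maxHeartbeats 3200000 in
theorem eigenvector_perturbation {m : ℕ} (A B : Matrix (Fin m) (Fin m) ℝ)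
    (hA : A.IsSymm) (hB : B.IsSymm)
    -- spectral decomposition of A: orthonormal eigenbasis P with eigenvalues lam
    (lam : Fin m → ℝ) (P : Fin m → (Fin m → ℝ))
    (heig : ∀ s, A.mulVec (P s) = lam s • P s)
    (horth : ∀ s t, P s ⬝ᵥ P t = if s = t then (1 : ℝ) else 0)
    (r : Fin m)
    -- λ_r(A) is a simple eigenvalue
    (hsimple : ∀ j, j ≠ r → lam j ≠ lam r)
    -- δ is the spectral gap (any lower bound on the gap)
    (δ : ℝ) (hδpos : 0 < δ) (hδ : ∀ j, j ≠ r → δ ≤ |lam j - lam r|)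
    -- β is the operator norm bound for B, with ‖B‖ ≤ β < δ/3
    (β : ℝ) (hβ0 : 0 ≤ β)
    (hβop : ∀ v : Fin m → ℝ, evNorm (B.mulVec v) ≤ β * evNorm v)
    (hβδ : β < δ / 3) :
    ∃ (μ : ℝ) (q R : Fin m → ℝ),
      -- μ is the eigenvalue of A + B corresponding to λ_r(A)
      |μ - lam r| ≤ β ∧
      (A + B).mulVec q = μ • q ∧
      -- μ is simple, with unit eigenvector q
      q ⬝ᵥ q = 1 ∧
      (∀ w, (A + B).mulVec w = μ • w → ∃ c : ℝ, w = c • q) ∧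
      -- sign convention
      0 ≤ P r ⬝ᵥ q ∧
      -- first-order expansion with quadratic error bound
      q - P r
        = -((∑ s ∈ Finset.univ.erase r,
              (lam s - lam r)⁻¹ • Matrix.vecMulVec (P s) (P s)).mulVec
            (B.mulVec (P r))) + R ∧
      evNorm R ≤ 10 * δ⁻¹ ^ 2 * β ^ 2 := by
  classical
  have hdpos : 0 < δ - β := by linarith
  -- squared operator norm bound
  have hBop2 : ∀ v : Fin m → ℝ, (B *ᵥ v) ⬝ᵥ (B *ᵥ v) ≤ β ^ 2 * (v ⬝ᵥ v) := by
    intro v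
    have h := hβop v
    have h2 := pow_le_pow_left₀ (evNorm_nonneg (B *ᵥ v)) h 2
    rw [evNorm_sq] at h2
    calc (B *ᵥ v) ⬝ᵥ (B *ᵥ v) ≤ (β * evNorm v) ^ 2 := h2
      _ = β ^ 2 * (v ⬝ᵥ v) := by rw [mul_pow, evNorm_sq]
  -- spectral theorem for A + B
  have hABs : (A + B).IsSymm := hA.add hB
  have hABh : (A + B).IsHermitian := by
    rwa [Matrix.IsHermitian, conjTranspose_eq_transpose_of_trivial]
  set μs : Fin m → ℝ := hABh.eigenvalues with hμs
  set Q : Fin m → (Fin m → ℝ) := fun i => (hABh.eigenvectorBasis i : EuclideanSpace ℝ (Fin m))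
    with hQdef
  have hQeig : ∀ i, (A + B) *ᵥ Q i = μs i • Q i := fun i => hABh.mulVec_eigenvectorBasis i
  have hQorth : ∀ i j, Q i ⬝ᵥ Q j = if i = j then (1 : ℝ) else 0 := by
    intro i j
    have h := (orthonormal_iff_ite.mp hABh.eigenvectorBasis.orthonormal) i j
    rw [EuclideanSpace.inner_eq_star_dotProduct] at h
    simpa [dotProduct_comm, star] using h
  -- choose the closest eigenvalue of A + B to lam r
  obtain ⟨i0, -, hmin⟩ := Finset.exists_min_image Finset.univ (fun i => |μs i - lam r|)
    ⟨r, Finset.mem_univ r⟩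
  set μ : ℝ := μs i0 with hμdef
  -- |μ - lam r| ≤ β
  have hPrr : P r ⬝ᵥ P r = 1 := by simpa using horth r r
  have hkeyQ : ∀ i, Q i ⬝ᵥ (B *ᵥ P r) = (μs i - lam r) * (Q i ⬝ᵥ P r) := by
    intro i
    have h1 : (A + B) *ᵥ P r = lam r • P r + B *ᵥ P r := by
      rw [Matrix.add_mulVec, heig r]
    have h2 : Q i ⬝ᵥ ((A + B) *ᵥ P r) = μs i * (Q i ⬝ᵥ P r) := by
      rw [← symm_dot hABs, hQeig i, smul_dotProduct, smul_eq_mul]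
    rw [h1, dotProduct_add, dotProduct_smul, smul_eq_mul] at h2
    linear_combination h2
  have hμr : |μ - lam r| ≤ β := by
    have hsum1 : ∑ i, (μs i - lam r) ^ 2 * (Q i ⬝ᵥ P r) ^ 2 ≤ β ^ 2 := by
      have hp := parseval_sq Q hQorth (B *ᵥ P r)
      have hb := hBop2 (P r)
      rw [hPrr, mul_one] at hb
      calc ∑ i, (μs i - lam r) ^ 2 * (Q i ⬝ᵥ P r) ^ 2
          = ∑ i, (Q i ⬝ᵥ (B *ᵥ P r)) ^ 2 := by
            refine Finset.sum_congr rfl fun i _ => ?_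
            rw [hkeyQ i]; ring
        _ = (B *ᵥ P r) ⬝ᵥ (B *ᵥ P r) := hp
        _ ≤ β ^ 2 := hb
    have hlow : (μ - lam r) ^ 2 * 1 ≤ β ^ 2 := by
      have hQPr : ∑ i, (Q i ⬝ᵥ P r) ^ 2 = 1 := by
        rw [parseval_sq Q hQorth (P r), hPrr]
      calc (μ - lam r) ^ 2 * 1 = ∑ i, (μ - lam r) ^ 2 * (Q i ⬝ᵥ P r) ^ 2 := by
            rw [← Finset.mul_sum, hQPr]
        _ ≤ ∑ i, (μs i - lam r) ^ 2 * (Q i ⬝ᵥ P r) ^ 2 := by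
            refine Finset.sum_le_sum fun i _ => ?_
            have h := hmin i (Finset.mem_univ i)
            have h2 : (μ - lam r) ^ 2 ≤ (μs i - lam r) ^ 2 := by
              rw [← sq_abs (μ - lam r), ← sq_abs (μs i - lam r)]
              exact pow_le_pow_left₀ (abs_nonneg _) h 2
            exact mul_le_mul_of_nonneg_right h2 (sq_nonneg _)
        _ ≤ β ^ 2 := hsum1
    rw [mul_one] at hlow
    calc |μ - lam r| = Real.sqrt ((μ - lam r) ^ 2) := (Real.sqrt_sq_eq_abs _).symm
      _ ≤ Real.sqrt (β ^ 2) := Real.sqrt_le_sqrt hlow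
      _ = β := Real.sqrt_sq hβ0
  -- gap bound for μ
  have hgap : ∀ s, s ≠ r → δ - β ≤ |μ - lam s| := by
    intro s hs
    have h1 := hδ s hs
    have h2 : |lam s - lam r| ≤ |lam s - μ| + |μ - lam r| := abs_sub_le _ _ _
    have h3 : |lam s - μ| = |μ - lam s| := abs_sub_comm _ _
    linarith
  -- coordinates of eigenvectors of μ
  have hK : ∀ (w : Fin m → ℝ), (A + B) *ᵥ w = μ • w → ∀ s,
      (μ - lam s) * (P s ⬝ᵥ w) = P s ⬝ᵥ (B *ᵥ w) := by
    intro w hw s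
    have h1 : P s ⬝ᵥ ((A + B) *ᵥ w) = μ * (P s ⬝ᵥ w) := by
      rw [hw, dotProduct_smul, smul_eq_mul]
    rw [Matrix.add_mulVec, dotProduct_add, ← symm_dot hA (P s) w, heig s,
      smul_dotProduct, smul_eq_mul] at h1
    linear_combination -h1
  -- generic sum bound over the complement of r
  have hSw : ∀ w : Fin m → ℝ, (A + B) *ᵥ w = μ • w →
      (δ - β) ^ 2 * ∑ s ∈ Finset.univ.erase r, (P s ⬝ᵥ w) ^ 2 ≤ β ^ 2 * (w ⬝ᵥ w) := by
    intro w hw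
    have hterm : ∀ s ∈ Finset.univ.erase r,
        (δ - β) ^ 2 * (P s ⬝ᵥ w) ^ 2 ≤ (P s ⬝ᵥ (B *ᵥ w)) ^ 2 := by
      intro s hs
      have hs' : s ≠ r := Finset.ne_of_mem_erase hs
      have h := hK w hw s
      have h2 : (μ - lam s) ^ 2 * (P s ⬝ᵥ w) ^ 2 = (P s ⬝ᵥ (B *ᵥ w)) ^ 2 := by
        rw [← h]; ring
      have h3 : (δ - β) ^ 2 ≤ (μ - lam s) ^ 2 := by
        rw [← sq_abs (μ - lam s)]
        exact pow_le_pow_left₀ hdpos.le (hgap s hs') 2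
      exact le_of_le_of_eq (mul_le_mul_of_nonneg_right h3 (sq_nonneg _)) h2
    calc (δ - β) ^ 2 * ∑ s ∈ Finset.univ.erase r, (P s ⬝ᵥ w) ^ 2
        = ∑ s ∈ Finset.univ.erase r, (δ - β) ^ 2 * (P s ⬝ᵥ w) ^ 2 := Finset.mul_sum _ _ _
      _ ≤ ∑ s ∈ Finset.univ.erase r, (P s ⬝ᵥ (B *ᵥ w)) ^ 2 := Finset.sum_le_sum hterm
      _ ≤ ∑ s, (P s ⬝ᵥ (B *ᵥ w)) ^ 2 :=
          Finset.sum_le_sum_of_subset_of_nonneg (Finset.erase_subset _ _)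
            (fun _ _ _ => sq_nonneg _)
      _ = (B *ᵥ w) ⬝ᵥ (B *ᵥ w) := parseval_sq P horth _
      _ ≤ β ^ 2 * (w ⬝ᵥ w) := hBop2 w
  -- unit eigenvectors have large r-component
  have h4β : 4 * β ^ 2 ≤ (δ - β) ^ 2 := by
    rw [show (4:ℝ) * β ^ 2 = (2 * β) ^ 2 by ring]
    exact pow_le_pow_left₀ (by positivity) (by linarith) 2
  have hmain : ∀ w : Fin m → ℝ, (A + B) *ᵥ w = μ • w → w ⬝ᵥ w = 1 →
      3 / 4 ≤ (P r ⬝ᵥ w) ^ 2 := by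
    intro w hw hu
    have hsplit : (P r ⬝ᵥ w) ^ 2 + ∑ s ∈ Finset.univ.erase r, (P s ⬝ᵥ w) ^ 2 = 1 := by
      have hp := parseval_sq P horth w
      rw [hu] at hp
      rw [← hp]
      exact Finset.add_sum_erase Finset.univ (fun s => (P s ⬝ᵥ w) ^ 2) (Finset.mem_univ r)
    have hs := hSw w hw
    rw [hu, mul_one] at hs
    have hS0 : 0 ≤ ∑ s ∈ Finset.univ.erase r, (P s ⬝ᵥ w) ^ 2 :=
      Finset.sum_nonneg fun _ _ => sq_nonneg _
    exact aux_main _ _ _ _ hs h4β (by positivity) hS0 hsplit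
  -- choose sign
  set q0 : Fin m → ℝ := Q i0 with hq0def
  have hq0eig : (A + B) *ᵥ q0 = μ • q0 := hQeig i0
  have hq0unit : q0 ⬝ᵥ q0 = 1 := by simpa using hQorth i0 i0
  set ε : ℝ := if P r ⬝ᵥ q0 < 0 then -1 else 1 with hεdef
  have hε2 : ε * ε = 1 := by rw [hεdef]; split <;> norm_num
  set q : Fin m → ℝ := ε • q0 with hqdef
  have hqeig : (A + B) *ᵥ q = μ • q := by
    rw [hqdef, Matrix.mulVec_smul, hq0eig, smul_comm]
  have hqunit : q ⬝ᵥ q = 1 := by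
    rw [hqdef, smul_dotProduct, dotProduct_smul, smul_eq_mul, smul_eq_mul,
      hq0unit, mul_one, hε2]
  have hcr0 : 0 ≤ P r ⬝ᵥ q := by
    rw [hqdef, dotProduct_smul, smul_eq_mul, hεdef]
    split
    · rename_i h; nlinarith [h]
    · rename_i h; push_neg at h; nlinarith [h]
  -- simplicity
  have hsimp : ∀ w, (A + B) *ᵥ w = μ • w → ∃ c : ℝ, w = c • q := by
    intro w hw
    by_cases h0 : w - (q ⬝ᵥ w) • q = 0
    · exact ⟨q ⬝ᵥ w, by rw [← sub_eq_zero]; exact h0⟩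
    · exfalso
      set w' : Fin m → ℝ := w - (q ⬝ᵥ w) • q with hw'def
      have hw'eig : (A + B) *ᵥ w' = μ • w' := by
        rw [hw'def, Matrix.mulVec_sub, Matrix.mulVec_smul, hw, hqeig, smul_sub, smul_comm]
      have hqw' : q ⬝ᵥ w' = 0 := by
        rw [hw'def, dotProduct_sub, dotProduct_smul, smul_eq_mul, hqunit,
          mul_one, sub_self]
      have hn : 0 < w' ⬝ᵥ w' := by
        rcases lt_or_eq_of_le (dotSelf_nonneg w') with h | h
        · exact h
        · exact absurd (dotProduct_self_eq_zero.mp h.symm) h0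
      set u : Fin m → ℝ := (Real.sqrt (w' ⬝ᵥ w'))⁻¹ • w' with hudef
      have hsq : Real.sqrt (w' ⬝ᵥ w') * Real.sqrt (w' ⬝ᵥ w') = w' ⬝ᵥ w' :=
        Real.mul_self_sqrt (le_of_lt hn)
      have hsqne : Real.sqrt (w' ⬝ᵥ w') ≠ 0 := by
        intro h; rw [h, mul_zero] at hsq; exact (ne_of_gt hn) hsq.symm
      have huu : u ⬝ᵥ u = 1 := by
        rw [hudef, smul_dotProduct, dotProduct_smul, smul_eq_mul, smul_eq_mul]
        field_simp
        rw [Real.sq_sqrt (le_of_lt hn)]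
      have hueig : (A + B) *ᵥ u = μ • u := by
        rw [hudef, Matrix.mulVec_smul, hw'eig, smul_comm]
      have hqu : q ⬝ᵥ u = 0 := by
        rw [hudef, dotProduct_smul, hqw', smul_zero]
      have h1 := hmain q hqeig hqunit
      have h2 := hmain u hueig huu
      have h3 := bessel2 (P r) q u hqunit huu hqu hPrr
      linarith
  -- the expansion
  set e : Fin m → ℝ := q - P r with hedef
  set Hv : Fin m → ℝ := (∑ s ∈ Finset.univ.erase r,
      (lam s - lam r)⁻¹ • Matrix.vecMulVec (P s) (P s)) *ᵥ (B *ᵥ P r) with hHvdef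
  refine ⟨μ, q, e + Hv, hμr, hqeig, hqunit, hsimp, hcr0, by rw [hedef]; abel, ?_⟩
  -- coordinates of e
  have hecoord : ∀ t, P t ⬝ᵥ e = if t = r then P r ⬝ᵥ q - 1 else P t ⬝ᵥ q := by
    intro t
    rw [hedef, dotProduct_sub, horth t r]
    by_cases h : t = r
    · subst h; rw [if_pos rfl, if_pos rfl]
    · rw [if_neg h, if_neg h, sub_zero]
  -- coordinates of Hv
  have hHv2 : Hv = ∑ s ∈ Finset.univ.erase r,
      ((lam s - lam r)⁻¹ * (P s ⬝ᵥ (B *ᵥ P r))) • P s := by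
    rw [hHvdef, sum_smul_vecMulVec_mulVec]
  have hHvcoord : ∀ t, P t ⬝ᵥ Hv
      = if t = r then 0 else (lam t - lam r)⁻¹ * (P t ⬝ᵥ (B *ᵥ P r)) := by
    intro t
    rw [hHv2, dotProduct_finsum]
    have hterm : ∀ s ∈ Finset.univ.erase r,
        P t ⬝ᵥ (((lam s - lam r)⁻¹ * (P s ⬝ᵥ (B *ᵥ P r))) • P s)
        = if t = s then (lam t - lam r)⁻¹ * (P t ⬝ᵥ (B *ᵥ P r)) else 0 := by
      intro s _
      rw [dotProduct_smul, smul_eq_mul, horth t s]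
      by_cases h : t = s
      · subst h; rw [if_pos rfl, if_pos rfl, mul_one]
      · rw [if_neg h, if_neg h, mul_zero]
    rw [Finset.sum_congr rfl hterm, Finset.sum_ite_eq]
    by_cases h : t = r
    · rw [if_pos h, if_neg (by simp [h])]
    · rw [if_neg h, if_pos (by simp [h])]
  -- coordinates of R = e + Hv
  have hRcoord : ∀ t, P t ⬝ᵥ (e + Hv) = if t = r then P r ⬝ᵥ q - 1
      else P t ⬝ᵥ q + (lam t - lam r)⁻¹ * (P t ⬝ᵥ (B *ᵥ P r)) := by
    intro t
    rw [dotProduct_add, hecoord t, hHvcoord t]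
    by_cases h : t = r
    · rw [if_pos h, if_pos h, if_pos h, add_zero]
    · rw [if_neg h, if_neg h, if_neg h]
  -- norm of R in coordinates
  have hN : (e + Hv) ⬝ᵥ (e + Hv) = (P r ⬝ᵥ q - 1) ^ 2
      + ∑ t ∈ Finset.univ.erase r,
          (P t ⬝ᵥ q + (lam t - lam r)⁻¹ * (P t ⬝ᵥ (B *ᵥ P r))) ^ 2 := by
    rw [← parseval_sq P horth (e + Hv),
      ← Finset.add_sum_erase Finset.univ (fun t => (P t ⬝ᵥ (e + Hv)) ^ 2) (Finset.mem_univ r)]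
    congr 1
    · rw [hRcoord r, if_pos rfl]
    · refine Finset.sum_congr rfl fun t ht => ?_
      rw [hRcoord t, if_neg (Finset.ne_of_mem_erase ht)]
  -- basic bounds on coordinates of q
  set S1 : ℝ := ∑ s ∈ Finset.univ.erase r, (P s ⬝ᵥ q) ^ 2 with hS1def
  have hS10 : 0 ≤ S1 := Finset.sum_nonneg fun _ _ => sq_nonneg _
  have hS1d : (δ - β) ^ 2 * S1 ≤ β ^ 2 := by
    have := hSw q hqeig
    rw [hqunit, mul_one] at this
    exact this
  have hcrsplit : (P r ⬝ᵥ q) ^ 2 + S1 = 1 := by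
    have hp := parseval_sq P horth q
    rw [hqunit] at hp
    rw [hS1def, ← hp]
    exact Finset.add_sum_erase Finset.univ (fun s => (P s ⬝ᵥ q) ^ 2) (Finset.mem_univ r)
  have hcr34 : 3 / 4 ≤ (P r ⬝ᵥ q) ^ 2 := hmain q hqeig hqunit
  have hS14 : S1 ≤ 1 / 4 := by linarith
  have hcr1 : P r ⬝ᵥ q ≤ 1 := aux_cr1 _ _ hcrsplit hS10
  have h1cr : 1 - P r ⬝ᵥ q ≤ S1 := aux_1cr _ _ hcrsplit hcr0 hS10
  have hee : e ⬝ᵥ e = (P r ⬝ᵥ q - 1) ^ 2 + S1 := by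
    rw [← parseval_sq P horth e,
      ← Finset.add_sum_erase Finset.univ (fun t => (P t ⬝ᵥ e) ^ 2) (Finset.mem_univ r)]
    congr 1
    · rw [hecoord r, if_pos rfl]
    · refine Finset.sum_congr rfl fun t ht => ?_
      rw [hecoord t, if_neg (Finset.ne_of_mem_erase ht)]
  have hee' : e ⬝ᵥ e ≤ S1 ^ 2 + S1 := by
    rw [hee]
    have := aux_sq (P r ⬝ᵥ q) S1 (by linarith) h1cr
    linarith
  -- sums of b and f squares
  have hsumb : ∑ s ∈ Finset.univ.erase r, (P s ⬝ᵥ (B *ᵥ P r)) ^ 2 ≤ β ^ 2 := by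
    calc ∑ s ∈ Finset.univ.erase r, (P s ⬝ᵥ (B *ᵥ P r)) ^ 2
        ≤ ∑ s, (P s ⬝ᵥ (B *ᵥ P r)) ^ 2 :=
          Finset.sum_le_sum_of_subset_of_nonneg (Finset.erase_subset _ _)
            (fun _ _ _ => sq_nonneg _)
      _ = (B *ᵥ P r) ⬝ᵥ (B *ᵥ P r) := parseval_sq P horth _
      _ ≤ β ^ 2 * (P r ⬝ᵥ P r) := hBop2 _
      _ = β ^ 2 := by rw [hPrr, mul_one]
  have hsumf : ∑ s ∈ Finset.univ.erase r, (P s ⬝ᵥ (B *ᵥ e)) ^ 2 ≤ β ^ 2 * (S1 ^ 2 + S1) := by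
    calc ∑ s ∈ Finset.univ.erase r, (P s ⬝ᵥ (B *ᵥ e)) ^ 2
        ≤ ∑ s, (P s ⬝ᵥ (B *ᵥ e)) ^ 2 :=
          Finset.sum_le_sum_of_subset_of_nonneg (Finset.erase_subset _ _)
            (fun _ _ _ => sq_nonneg _)
      _ = (B *ᵥ e) ⬝ᵥ (B *ᵥ e) := parseval_sq P horth _
      _ ≤ β ^ 2 * (e ⬝ᵥ e) := hBop2 _
      _ ≤ β ^ 2 * (S1 ^ 2 + S1) := mul_le_mul_of_nonneg_left hee' (sq_nonneg β)
  -- per-term bound on the erase-r coordinates of R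
  have hterm2 : ∀ t ∈ Finset.univ.erase r,
      ((δ - β) ^ 2 * δ ^ 2) * (P t ⬝ᵥ q + (lam t - lam r)⁻¹ * (P t ⬝ᵥ (B *ᵥ P r))) ^ 2
      ≤ 2 * β ^ 2 * (P t ⬝ᵥ (B *ᵥ P r)) ^ 2 + 2 * δ ^ 2 * (P t ⬝ᵥ (B *ᵥ e)) ^ 2 := by
    intro t ht
    have htr : t ≠ r := Finset.ne_of_mem_erase ht
    have hνt := hgap t htr
    have hν2 : (δ - β) ^ 2 ≤ (μ - lam t) ^ 2 := by
      rw [← sq_abs (μ - lam t)]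
      exact pow_le_pow_left₀ hdpos.le hνt 2
    have hlamt := hδ t htr
    have hlam2 : δ ^ 2 ≤ (lam t - lam r) ^ 2 := by
      rw [← sq_abs (lam t - lam r)]
      exact pow_le_pow_left₀ hδpos.le hlamt 2
    have hνne : μ - lam t ≠ 0 := by
      intro h
      rw [h] at hν2
      have := pow_pos hdpos 2
      simp only [ne_eq, OfNat.ofNat_ne_zero, not_false_eq_true, zero_pow] at hν2
      linarith
    have hlamne : lam t - lam r ≠ 0 := sub_ne_zero.mpr (hsimple t htr)
    have hKt := hK q hqeig t
    have hPre : P r + e = q := by rw [hedef]; abel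
    have hq' : B *ᵥ q = B *ᵥ P r + B *ᵥ e := by rw [← hPre, Matrix.mulVec_add]
    have hbf : (μ - lam t) * (P t ⬝ᵥ q) = P t ⬝ᵥ (B *ᵥ P r) + P t ⬝ᵥ (B *ᵥ e) := by
      rw [hKt, hq', dotProduct_add]
    have hct : P t ⬝ᵥ q = (μ - lam t)⁻¹ * (P t ⬝ᵥ (B *ᵥ P r) + P t ⬝ᵥ (B *ᵥ e)) := by
      field_simp
      linear_combination hbf
    set g : ℝ := (μ - lam t)⁻¹ + (lam t - lam r)⁻¹ with hgdef
    have hρ : P t ⬝ᵥ q + (lam t - lam r)⁻¹ * (P t ⬝ᵥ (B *ᵥ P r))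
        = g * (P t ⬝ᵥ (B *ᵥ P r)) + (μ - lam t)⁻¹ * (P t ⬝ᵥ (B *ᵥ e)) := by
      rw [hct, hgdef]; ring
    have hgid : g * ((μ - lam t) * (lam t - lam r)) = μ - lam r := by
      rw [hgdef]
      field_simp
      try ring
    have hβμ : (μ - lam r) ^ 2 ≤ β ^ 2 := by
      rw [← sq_abs (μ - lam r)]
      exact pow_le_pow_left₀ (abs_nonneg _) hμr 2
    have hg2 : g ^ 2 * ((δ - β) ^ 2 * δ ^ 2) ≤ β ^ 2 := by
      have hD : (δ - β) ^ 2 * δ ^ 2 ≤ (μ - lam t) ^ 2 * (lam t - lam r) ^ 2 :=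
        mul_le_mul hν2 hlam2 (sq_nonneg _) (sq_nonneg _)
      have h1 : g ^ 2 * ((μ - lam t) ^ 2 * (lam t - lam r) ^ 2) = (μ - lam r) ^ 2 := by
        rw [← hgid]; ring
      calc g ^ 2 * ((δ - β) ^ 2 * δ ^ 2) ≤ g ^ 2 * ((μ - lam t) ^ 2 * (lam t - lam r) ^ 2) :=
            mul_le_mul_of_nonneg_left hD (sq_nonneg g)
        _ = (μ - lam r) ^ 2 := h1
        _ ≤ β ^ 2 := hβμ
    have hi2 : ((μ - lam t)⁻¹) ^ 2 * (δ - β) ^ 2 ≤ 1 := by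
      have h1 : ((μ - lam t)⁻¹) ^ 2 * (μ - lam t) ^ 2 = 1 := by field_simp
      calc ((μ - lam t)⁻¹) ^ 2 * (δ - β) ^ 2 ≤ ((μ - lam t)⁻¹) ^ 2 * (μ - lam t) ^ 2 :=
            mul_le_mul_of_nonneg_left hν2 (sq_nonneg _)
        _ = 1 := h1
    rw [hρ]
    exact aux_term (δ ^ 2) ((δ - β) ^ 2) g ((μ - lam t)⁻¹) (P t ⬝ᵥ (B *ᵥ P r))
      (P t ⬝ᵥ (B *ᵥ e)) (β ^ 2) hg2 hi2 (sq_nonneg _) (sq_nonneg _)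
  -- summing the per-term bounds
  set Sρ : ℝ := ∑ t ∈ Finset.univ.erase r,
      (P t ⬝ᵥ q + (lam t - lam r)⁻¹ * (P t ⬝ᵥ (B *ᵥ P r))) ^ 2 with hSρdef
  have hSρ0 : 0 ≤ Sρ := Finset.sum_nonneg fun _ _ => sq_nonneg _
  have hsumρ : ((δ - β) ^ 2 * δ ^ 2) * Sρ
      ≤ 2 * β ^ 2 * β ^ 2 + 2 * δ ^ 2 * (β ^ 2 * (S1 ^ 2 + S1)) := by
    calc ((δ - β) ^ 2 * δ ^ 2) * Sρ
        = ∑ t ∈ Finset.univ.erase r, ((δ - β) ^ 2 * δ ^ 2)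
            * (P t ⬝ᵥ q + (lam t - lam r)⁻¹ * (P t ⬝ᵥ (B *ᵥ P r))) ^ 2 := by
          rw [hSρdef, Finset.mul_sum]
      _ ≤ ∑ t ∈ Finset.univ.erase r, (2 * β ^ 2 * (P t ⬝ᵥ (B *ᵥ P r)) ^ 2
            + 2 * δ ^ 2 * (P t ⬝ᵥ (B *ᵥ e)) ^ 2) := Finset.sum_le_sum hterm2
      _ = 2 * β ^ 2 * ∑ t ∈ Finset.univ.erase r, (P t ⬝ᵥ (B *ᵥ P r)) ^ 2
            + 2 * δ ^ 2 * ∑ t ∈ Finset.univ.erase r, (P t ⬝ᵥ (B *ᵥ e)) ^ 2 := by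
          rw [Finset.sum_add_distrib, Finset.mul_sum, Finset.mul_sum]
      _ ≤ 2 * β ^ 2 * β ^ 2 + 2 * δ ^ 2 * (β ^ 2 * (S1 ^ 2 + S1)) := by
          gcongr
  -- numeric conclusion
  have hd2 : 4 / 9 * δ ^ 2 ≤ (δ - β) ^ 2 := by
    rw [show (4:ℝ) / 9 * δ ^ 2 = (2 / 3 * δ) ^ 2 by ring]
    exact pow_le_pow_left₀ (by positivity) (by linarith) 2
  have hS1δ : S1 * δ ^ 2 ≤ 9 / 4 * β ^ 2 := by
    exact aux_S1δ _ _ _ _ hS1d hd2 hS10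
  have hS1sq : δ ^ 2 * S1 ^ 2 ≤ 9 / 16 * β ^ 2 := by
    exact aux_S1sq _ _ _ hS1δ hS14 hS10 (sq_nonneg δ) (sq_nonneg β)
  have hSρδ : δ ^ 2 * δ ^ 2 * Sρ ≤ 18 * β ^ 4 := by
    have h := aux_Srho Sρ S1 (δ ^ 2) ((δ - β) ^ 2) (β ^ 2)
      (by linarith [hsumρ]) hd2 hSρ0 hS1sq hS1δ (sq_nonneg β) (sq_nonneg δ)
    calc δ ^ 2 * δ ^ 2 * Sρ ≤ 18 * (β ^ 2 * β ^ 2) := h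
      _ = 18 * β ^ 4 := by ring
  have hcr1sq : (P r ⬝ᵥ q - 1) ^ 2 * (δ ^ 2 * δ ^ 2) ≤ 81 / 16 * β ^ 4 := by
    have h1 : (P r ⬝ᵥ q - 1) ^ 2 ≤ S1 ^ 2 := aux_sq _ _ (by linarith) h1cr
    have h := aux_cr1sq ((P r ⬝ᵥ q - 1) ^ 2) S1 (δ ^ 2) (β ^ 2) h1 hS1δ hS10 (sq_nonneg δ)
    calc (P r ⬝ᵥ q - 1) ^ 2 * (δ ^ 2 * δ ^ 2) ≤ 81 / 16 * (β ^ 2 * β ^ 2) := h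
      _ = 81 / 16 * β ^ 4 := by ring
  have hfin : (e + Hv) ⬝ᵥ (e + Hv) ≤ (10 * δ⁻¹ ^ 2 * β ^ 2) ^ 2 := by
    have hδ4 : (0:ℝ) < δ ^ 2 * δ ^ 2 := by positivity
    have heq : (10 * δ⁻¹ ^ 2 * β ^ 2) ^ 2 = 100 * β ^ 4 / (δ ^ 2 * δ ^ 2) := by
      field_simp
      ring
    rw [heq, le_div_iff₀ hδ4, hN]
    have hNsum : ((P r ⬝ᵥ q - 1) ^ 2 + Sρ) * (δ ^ 2 * δ ^ 2)
        ≤ 81 / 16 * β ^ 4 + 18 * β ^ 4 := by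
          have : ((P r ⬝ᵥ q - 1) ^ 2 + Sρ) * (δ ^ 2 * δ ^ 2)
              = (P r ⬝ᵥ q - 1) ^ 2 * (δ ^ 2 * δ ^ 2) + δ ^ 2 * δ ^ 2 * Sρ := by ring
          rw [this]
          exact add_le_add hcr1sq hSρδ
    calc ((P r ⬝ᵥ q - 1) ^ 2 + Sρ) * (δ ^ 2 * δ ^ 2)
        ≤ 81 / 16 * β ^ 4 + 18 * β ^ 4 := hNsum
      _ ≤ 100 * β ^ 4 := by
          have h4 : (0:ℝ) ≤ β ^ 4 := by positivity
          linarith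
  calc evNorm (e + Hv) = Real.sqrt ((e + Hv) ⬝ᵥ (e + Hv)) := rfl
    _ ≤ Real.sqrt ((10 * δ⁻¹ ^ 2 * β ^ 2) ^ 2) := Real.sqrt_le_sqrt hfin
    _ = 10 * δ⁻¹ ^ 2 * β ^ 2 := Real.sqrt_sq (by positivity)
end
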